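/- Let ε ∈ [0,1), Δ ≥ 0, and x ∈ ℝ. Write σ(x) = 1/(1 + exp(−x)) and SiLU(x) = x·σ(x). Suppose ẽ > 0 satisfies |ẽ − exp(−x)| ≤ ε·exp(−x), and let σ̃ = 1/(1 + ẽ) + δ_div with |δ_div| ≤ Δ, and f̃ = x·σ̃. Then |f̃ − SiLU(x)| ≤ |x|·(2ε/(1−ε)) + |x|·Δ. -/

import Mathlib

/-- Error bound for NLS-SiLU: a relative error `ε` on the approximation of `exp(-x)`
plus an additive division-neuron error bounded by `Δ` gives
`|f̃ - SiLU x| ≤ |x|·(2ε/(1-ε)) + |x|·Δ`. -/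
theorem nls_silu_error_bound
    (ε Δ x : ℝ) (hε0 : 0 ≤ ε) (hε1 : ε < 1) (hΔ : 0 ≤ Δ)
    (etil : ℝ) (hpos : 0 < etil)
    (he : |etil - Real.exp (-x)| ≤ ε * Real.exp (-x))
    (δdiv : ℝ) (hδ : |δdiv| ≤ Δ)
    (σtil : ℝ) (hσ : σtil = 1 / (1 + etil) + δdiv)
    (ftil : ℝ) (hf : ftil = x * σtil) :
    |ftil - x * (1 / (1 + Real.exp (-x)))| ≤ |x| * (2 * ε / (1 - ε)) + |x| * Δ := by
  set E := Real.exp (-x) with hE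
  have hEpos : 0 < E := Real.exp_pos _
  have h1E : (0:ℝ) < 1 + E := by linarith
  have h1e : (0:ℝ) < 1 + etil := by linarith
  have key : |1 / (1 + etil) - 1 / (1 + E)| ≤ 2 * ε / (1 - ε) := by
    have hdiff : 1 / (1 + etil) - 1 / (1 + E) = (E - etil) / ((1 + etil) * (1 + E)) := by
      field_simp
      ring
    rw [hdiff, abs_div, abs_of_pos (mul_pos h1e h1E)]
    have h1 : |E - etil| ≤ ε * E := by rwa [abs_sub_comm]
    have h2 : E ≤ (1 + etil) * (1 + E) := by nlinarith
    have h3 : |E - etil| / ((1 + etil) * (1 + E)) ≤ ε := by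
      rw [div_le_iff₀ (mul_pos h1e h1E)]
      calc |E - etil| ≤ ε * E := h1
        _ ≤ ε * ((1 + etil) * (1 + E)) := by nlinarith
    have h4 : ε ≤ 2 * ε / (1 - ε) := by
      rw [le_div_iff₀ (by linarith : (0:ℝ) < 1 - ε)]
      nlinarith
    linarith
  have : ftil - x * (1 / (1 + E)) = x * ((1 / (1 + etil) - 1 / (1 + E)) + δdiv) := by
    rw [hf, hσ]; ring
  rw [this, abs_mul]
  calc |x| * |(1 / (1 + etil) - 1 / (1 + E)) + δdiv|
      ≤ |x| * (|1 / (1 + etil) - 1 / (1 + E)| + |δdiv|) :=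
        mul_le_mul_of_nonneg_left (abs_add_le _ _) (abs_nonneg x)
    _ ≤ |x| * (2 * ε / (1 - ε) + Δ) :=
        mul_le_mul_of_nonneg_left (by linarith) (abs_nonneg x)
    _ = |x| * (2 * ε / (1 - ε)) + |x| * Δ := by ring
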